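/- Suppose the jobs are indexed in EDD order, i.e., d is monotone nondecreasing, and suppose k is the first late job of the EDD sequence: ∑_{i ≤ j} p_i ≤ d j for all j < k, and ∑_{i ≤ k} p_i > d k. Let m ≤ k be a job with p_m = max_{i ≤ k} p_i, and let I⁻ be the sub-instance on the jobs other than m (same processing times and due dates). Then opt(I⁻) = opt(I) − 1, where opt denotes the minimum number of late jobs over all schedules of the respective job set. -/

import Mathlib

/-- Completion time of job `j` when the jobs of the set `J` are scheduled
according to the ordering given by `σ`. -/
def completionOn {n : ℕ} (p : Fin n → ℕ) (J : Finset (Fin n))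
    (σ : Equiv.Perm (Fin n)) (j : Fin n) : ℕ :=
  ∑ i ∈ J.filter (fun i => σ.symm i ≤ σ.symm j), p i

/-- Number of late jobs of the sub-instance on the job set `J` under the
ordering given by `σ`. -/
def numLateOn {n : ℕ} (p d : Fin n → ℕ) (J : Finset (Fin n))
    (σ : Equiv.Perm (Fin n)) : ℕ :=
  (J.filter (fun j => d j < completionOn p J σ j)).card

/-- `opt(J)`: minimum number of late jobs over all schedules of the job set `J`. -/
noncomputable def optOn {n : ℕ} (p d : Fin n → ℕ) (J : Finset (Fin n)) : ℕ :=
  sInf {c | ∃ σ : Equiv.Perm (Fin n), c = numLateOn p d J σ}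

namespace OptAux

noncomputable def schedPerm {n : ℕ} (E : Finset (Fin n)) : Equiv.Perm (Fin n) :=
  (finCongr ((E.card_add_card_compl).trans (Fintype.card_fin n)).symm).trans <|
    (finSumFinEquiv (m := E.card) (n := Eᶜ.card)).symm.trans <|
      (Equiv.sumCongr (E.orderIsoOfFin rfl).toEquiv
        ((Eᶜ.orderIsoOfFin rfl).toEquiv.trans
          (Equiv.subtypeEquivRight (fun _ => Finset.mem_compl)))).trans
        (Equiv.sumCompl (· ∈ E))

lemma schedPerm_apply_lt {n : ℕ} (E : Finset (Fin n)) (q : Fin n) (h : q.val < E.card) :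
    schedPerm E q = (E.orderIsoOfFin rfl ⟨q.val, h⟩ : Fin n) := by
  unfold schedPerm
  simp only [Equiv.trans_apply, finCongr_apply]
  have : (Fin.cast ((E.card_add_card_compl).trans (Fintype.card_fin n)).symm q)
      = Fin.castAdd Eᶜ.card ⟨q.val, h⟩ := by ext; rfl
  rw [this, finSumFinEquiv_symm_apply_castAdd]
  simp

lemma schedPerm_apply_ge {n : ℕ} (E : Finset (Fin n)) (q : Fin n) (h : ¬ q.val < E.card) :
    schedPerm E q ∉ E := by
  unfold schedPerm
  simp only [Equiv.trans_apply, finCongr_apply]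
  have hq : E.card + (q.val - E.card) < Eᶜ.card + E.card := by
    have := q.isLt
    have := E.card_add_card_compl.trans (Fintype.card_fin n)
    omega
  have : (Fin.cast ((E.card_add_card_compl).trans (Fintype.card_fin n)).symm q)
      = Fin.natAdd E.card ⟨q.val - E.card, by omega⟩ := by ext; simp; omega
  rw [this, finSumFinEquiv_symm_apply_natAdd]
  simp
  exact fun hmem => (Finset.mem_compl.mp (Finset.orderEmbOfFin_mem _ _ _)) hmem

lemma schedPerm_mem_iff {n : ℕ} (E : Finset (Fin n)) (q : Fin n) :
    schedPerm E q ∈ E ↔ q.val < E.card := by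
  constructor
  · intro hmem; by_contra h; exact schedPerm_apply_ge E q h hmem
  · intro h; rw [schedPerm_apply_lt E q h]; exact (E.orderIsoOfFin rfl ⟨q.val, h⟩).2

lemma schedPerm_le_iff {n : ℕ} (E : Finset (Fin n)) (a b : Fin n)
    (ha : a.val < E.card) (hb : b.val < E.card) :
    schedPerm E a ≤ schedPerm E b ↔ a ≤ b := by
  rw [schedPerm_apply_lt E a ha, schedPerm_apply_lt E b hb]
  rw [Subtype.coe_le_coe]
  rw [(E.orderIsoOfFin rfl).le_iff_le]
  exact Iff.rfl

def prefixSum {n : ℕ} (p : Fin n → ℕ) (E : Finset (Fin n)) (j : Fin n) : ℕ :=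
  ∑ i ∈ E.filter (· ≤ j), p i

def Feasible {n : ℕ} (p d : Fin n → ℕ) (E : Finset (Fin n)) : Prop :=
  ∀ j ∈ E, prefixSum p E j ≤ d j

lemma completion_schedPerm {n : ℕ} (p : Fin n → ℕ) (E J : Finset (Fin n))
    (hEJ : E ⊆ J) (j : Fin n) (hj : j ∈ E) :
    completionOn p J (schedPerm E) j = prefixSum p E j := by
  unfold completionOn prefixSum
  congr 1
  ext i
  simp only [Finset.mem_filter]
  set σ := schedPerm E with hσ
  have happ : ∀ x : Fin n, σ (σ.symm x) = x := fun x => σ.apply_symm_apply x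
  have hjq : (σ.symm j).val < E.card := by
    rw [← schedPerm_mem_iff E (σ.symm j), ← hσ, happ]; exact hj
  constructor
  · rintro ⟨hiJ, hle⟩
    have hiq : (σ.symm i).val < E.card := lt_of_le_of_lt hle hjq
    have hiE : i ∈ E := by
      rw [← happ i, hσ, schedPerm_mem_iff]; exact hiq
    refine ⟨hiE, ?_⟩
    have := (schedPerm_le_iff E (σ.symm i) (σ.symm j) hiq hjq).mpr hle
    rwa [← hσ, happ, happ] at this
  · rintro ⟨hiE, hij⟩
    have hiq : (σ.symm i).val < E.card := by
      rw [← schedPerm_mem_iff E (σ.symm i), ← hσ, happ]; exact hiE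
    refine ⟨hEJ hiE, ?_⟩
    have := (schedPerm_le_iff E (σ.symm i) (σ.symm j) hiq hjq)
    rw [← hσ, happ, happ] at this
    exact this.mp hij

lemma numLate_schedPerm_le {n : ℕ} (p d : Fin n → ℕ) (E J : Finset (Fin n))
    (hEJ : E ⊆ J) (hE : Feasible p d E) :
    numLateOn p d J (schedPerm E) + E.card ≤ J.card := by
  have hsub : J.filter (fun j => d j < completionOn p J (schedPerm E) j) ⊆ J \ E := by
    intro j hjf
    simp only [Finset.mem_filter] at hjf
    refine Finset.mem_sdiff.mpr ⟨hjf.1, fun hjE => ?_⟩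
    have h1 := completion_schedPerm p E J hEJ j hjE
    have h2 := hE j hjE
    omega
  have h1 : numLateOn p d J (schedPerm E) ≤ (J \ E).card := Finset.card_le_card hsub
  have h2 : (J \ E).card + E.card = J.card := by
    rw [Finset.card_sdiff_of_subset hEJ]
    have := Finset.card_le_card hEJ
    omega
  omega

lemma feasible_onTime {n : ℕ} (p d : Fin n → ℕ) (hd : Monotone d)
    (J : Finset (Fin n)) (σ : Equiv.Perm (Fin n)) :
    Feasible p d (J.filter (fun j => completionOn p J σ j ≤ d j)) := by
  intro j hj
  set E := J.filter (fun j => completionOn p J σ j ≤ d j) with hEdef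
  have hT : (E.filter (· ≤ j)).Nonempty := ⟨j, Finset.mem_filter.mpr ⟨hj, le_refl j⟩⟩
  obtain ⟨j', hj'T, hmax⟩ := Finset.exists_max_image (E.filter (· ≤ j)) (fun i => σ.symm i) hT
  have hj'E : j' ∈ E := (Finset.mem_filter.mp hj'T).1
  have hj'j : j' ≤ j := by simpa using (Finset.mem_filter.mp hj'T).2
  have hsub : E.filter (· ≤ j) ⊆ J.filter (fun i => σ.symm i ≤ σ.symm j') := by
    intro i hi
    exact Finset.mem_filter.mpr
      ⟨(Finset.mem_filter.mp (Finset.mem_filter.mp hi).1).1, hmax i hi⟩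
  calc prefixSum p E j ≤ completionOn p J σ j' := Finset.sum_le_sum_of_subset hsub
    _ ≤ d j' := by
        have := (Finset.mem_filter.mp hj'E).2
        simpa using this
    _ ≤ d j := hd hj'j

lemma opt_spec {n : ℕ} (p d : Fin n → ℕ) (J : Finset (Fin n)) :
    ∃ σ : Equiv.Perm (Fin n), optOn p d J = numLateOn p d J σ :=
  Nat.sInf_mem (⟨numLateOn p d J 1, 1, rfl⟩ :
    Set.Nonempty {c | ∃ σ : Equiv.Perm (Fin n), c = numLateOn p d J σ})

lemma optOn_le {n : ℕ} (p d : Fin n → ℕ) (J : Finset (Fin n)) (σ : Equiv.Perm (Fin n)) :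
    optOn p d J ≤ numLateOn p d J σ :=
  Nat.sInf_le ⟨σ, rfl⟩

lemma onTime_card {n : ℕ} (p d : Fin n → ℕ) (J : Finset (Fin n)) (σ : Equiv.Perm (Fin n)) :
    (J.filter (fun j => completionOn p J σ j ≤ d j)).card + numLateOn p d J σ = J.card := by
  unfold numLateOn
  have : (J.filter (fun j => d j < completionOn p J σ j))
      = J.filter (fun j => ¬ (completionOn p J σ j ≤ d j)) := by
    apply Finset.filter_congr
    intro x _
    exact not_le.symm
  rw [this]
  exact Finset.card_filter_add_card_filter_not _

end OptAux

open OptAux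

/-- If the jobs are in EDD order, `k` is the first late job of the EDD sequence,
and `m ≤ k` has maximum processing time among the jobs `i ≤ k`, then deleting `m`
decreases the minimum number of late jobs by exactly one:
`opt(I⁻) = opt(I) - 1`. -/
theorem opt_erase_max_eq {n : ℕ} (p d : Fin n → ℕ) (hd : Monotone d)
    (k : Fin n)
    (hfirst : ∀ j : Fin n, j < k → ∑ i ∈ Finset.univ.filter (· ≤ j), p i ≤ d j)
    (hk : d k < ∑ i ∈ Finset.univ.filter (· ≤ k), p i)
    (m : Fin n) (hmk : m ≤ k) (hmax : ∀ i : Fin n, i ≤ k → p i ≤ p m) :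
    optOn p d (Finset.univ.erase m) + 1 = optOn p d Finset.univ := by
  have hn : 0 < n := k.pos
  set J0 : Finset (Fin n) := Finset.univ.erase m with hJ0
  have hJ0card : J0.card = n - 1 := by
    rw [hJ0, Finset.card_erase_of_mem (Finset.mem_univ m), Finset.card_univ, Fintype.card_fin]
  have hunivcard : (Finset.univ : Finset (Fin n)).card = n := by
    rw [Finset.card_univ, Fintype.card_fin]
  -- direction 1 : optOn univ ≤ optOn J0 + 1
  have dir1 : optOn p d Finset.univ ≤ optOn p d J0 + 1 := by
    obtain ⟨σ₀, hσ₀⟩ := opt_spec p d J0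
    set E0 := J0.filter (fun j => completionOn p J0 σ₀ j ≤ d j) with hE0
    have hE0feas : Feasible p d E0 := feasible_onTime p d hd J0 σ₀
    have hcard0 : E0.card + numLateOn p d J0 σ₀ = n - 1 := by
      rw [hE0, onTime_card, hJ0card]
    have h1 := numLate_schedPerm_le p d E0 Finset.univ (Finset.subset_univ E0) hE0feas
    rw [hunivcard] at h1
    have h2 := optOn_le p d Finset.univ (schedPerm E0)
    omega
  -- direction 2 : optOn J0 + 1 ≤ optOn univ
  have dir2 : optOn p d J0 + 1 ≤ optOn p d Finset.univ := by
    obtain ⟨σ₁, hσ₁⟩ := opt_spec p d (Finset.univ : Finset (Fin n))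
    set E1 := Finset.univ.filter (fun j => completionOn p Finset.univ σ₁ j ≤ d j) with hE1
    have hE1feas : Feasible p d E1 := feasible_onTime p d hd Finset.univ σ₁
    have hcard1 : E1.card + numLateOn p d Finset.univ σ₁ = n := by
      rw [hE1, onTime_card, hunivcard]
    -- some job ≤ k is not in E1
    have hnotall : ∃ ℓ : Fin n, ℓ ≤ k ∧ ℓ ∉ E1 := by
      by_contra hcon
      push_neg at hcon
      have hkE : k ∈ E1 := hcon k le_rfl
      have hfe := hE1feas k hkE
      have heq : prefixSum p E1 k = ∑ i ∈ Finset.univ.filter (· ≤ k), p i := by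
        unfold prefixSum
        congr 1
        ext i
        simp only [Finset.mem_filter, Finset.mem_univ, true_and]
        exact ⟨fun h => h.2, fun h => ⟨hcon i h, h⟩⟩
      omega
    obtain ⟨ℓ, hℓk, hℓE⟩ := hnotall
    have hc1pos : 1 ≤ numLateOn p d Finset.univ σ₁ := by
      have hmem : ℓ ∈ Finset.univ.filter (fun j => d j < completionOn p Finset.univ σ₁ j) := by
        simp only [hE1, Finset.mem_filter, Finset.mem_univ, true_and, not_le] at hℓE ⊢
        omega
      exact Finset.card_pos.mpr ⟨ℓ, hmem⟩
    by_cases hmE : m ∈ E1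
    · -- exchange m for ℓ
      have hℓm : ℓ ≠ m := fun h => hℓE (h ▸ hmE)
      set E2 := insert ℓ (E1.erase m) with hE2
      have hℓnot : ℓ ∉ E1.erase m := fun h => hℓE (Finset.mem_erase.mp h).2
      have hE2card : E2.card = E1.card := by
        rw [hE2, Finset.card_insert_of_notMem hℓnot, Finset.card_erase_of_mem hmE]
        have : 0 < E1.card := Finset.card_pos.mpr ⟨m, hmE⟩
        omega
      have hE2sub : E2 ⊆ J0 := by
        intro x hx
        rcases Finset.mem_insert.mp hx with h | h
        · exact Finset.mem_erase.mpr ⟨h ▸ hℓm, Finset.mem_univ x⟩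
        · exact Finset.mem_erase.mpr ⟨(Finset.mem_erase.mp h).1, Finset.mem_univ x⟩
      have hE2feas : Feasible p d E2 := by
        intro j hj
        unfold prefixSum
        by_cases hjk : j < k
        · calc ∑ i ∈ E2.filter (· ≤ j), p i
              ≤ ∑ i ∈ Finset.univ.filter (· ≤ j), p i := by
                apply Finset.sum_le_sum_of_subset
                intro x hx
                simp only [Finset.mem_filter, Finset.mem_univ, true_and] at hx ⊢
                exact hx.2
            _ ≤ d j := hfirst j hjk
        · have hkj : k ≤ j := le_of_not_gt hjk
          have hmj : m ≤ j := le_trans hmk hkj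
          have hℓj : ℓ ≤ j := le_trans hℓk hkj
          have hfilt : E2.filter (· ≤ j) = insert ℓ ((E1.erase m).filter (· ≤ j)) := by
            rw [hE2, Finset.filter_insert, if_pos hℓj]
          have hℓnotf : ℓ ∉ (E1.erase m).filter (· ≤ j) :=
            fun h => hℓnot (Finset.mem_filter.mp h).1
          have hsum2 : ∑ i ∈ E2.filter (· ≤ j), p i
              = p ℓ + ∑ i ∈ (E1.erase m).filter (· ≤ j), p i := by
            rw [hfilt, Finset.sum_insert hℓnotf]
          rcases Finset.mem_insert.mp hj with hjℓ | hjE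
          · -- j = ℓ, hence ℓ = k
            subst hjℓ
            have hℓeqk : j = k := le_antisymm hℓk hkj
            have hmltk : m < k := lt_of_le_of_ne hmk (fun h => hℓm (hℓeqk.trans h.symm))
            have hkpos : 0 < k.val := by
              rcases Nat.eq_zero_or_pos k.val with h0 | h0
              · exfalso; have : m.val < k.val := hmltk; omega
              · exact h0
            set k' : Fin n := ⟨k.val - 1, lt_trans (by omega) k.isLt⟩ with hk'
            have hk'k : k' < k := by
              simp only [Fin.lt_def, hk']
              omega
            have hsub3 : (E1.erase m).filter (· ≤ j)
                ⊆ Finset.univ.filter (fun i => i < k ∧ i ≠ m) := by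
              intro x hx
              obtain ⟨hxe, hxj⟩ := Finset.mem_filter.mp hx
              obtain ⟨hxm, hxE1⟩ := Finset.mem_erase.mp hxe
              have hxk : x ≠ k := fun h => (h ▸ hℓeqk ▸ hℓE : x ∈ E1 → False) hxE1
              refine Finset.mem_filter.mpr ⟨Finset.mem_univ x, ?_, hxm⟩
              have : x ≤ k := hℓeqk ▸ hxj
              exact lt_of_le_of_ne this hxk
            have hTsum : p m + ∑ i ∈ Finset.univ.filter (fun i => i < k ∧ i ≠ m), p i
                = ∑ i ∈ Finset.univ.filter (· < k), p i := by
              have hmnot : m ∉ Finset.univ.filter (fun i => i < k ∧ i ≠ m) := by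
                simp
              have : Finset.univ.filter (fun i : Fin n => i < k)
                  = insert m (Finset.univ.filter (fun i => i < k ∧ i ≠ m)) := by
                ext x
                simp only [Finset.mem_filter, Finset.mem_univ, true_and, Finset.mem_insert]
                constructor
                · intro hx
                  by_cases hxm : x = m
                  · exact Or.inl hxm
                  · exact Or.inr ⟨hx, hxm⟩
                · rintro (rfl | ⟨h1, _⟩)
                  · exact hmltk
                  · exact h1
              rw [this, Finset.sum_insert hmnot]
            have hltk : Finset.univ.filter (fun i : Fin n => i < k)
                = Finset.univ.filter (· ≤ k') := by
              ext x
              simp only [Finset.mem_filter, Finset.mem_univ, true_and,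
                Fin.lt_def, Fin.le_def, hk']
              omega
            have hbound : ∑ i ∈ (E1.erase m).filter (· ≤ j), p i
                ≤ ∑ i ∈ Finset.univ.filter (fun i => i < k ∧ i ≠ m), p i :=
              Finset.sum_le_sum_of_subset hsub3
            have hpj : p j ≤ p m := hmax j hℓk
            have hfin : ∑ i ∈ Finset.univ.filter (· ≤ k'), p i ≤ d k' := hfirst k' hk'k
            have hdk' : d k' ≤ d j := hℓeqk ▸ hd (le_of_lt hk'k)
            rw [hsum2]
            rw [hltk] at hTsum
            omega
          · -- j ∈ E1.erase m
            have hjm : j ≠ m := (Finset.mem_erase.mp hjE).1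
            have hjE1 : j ∈ E1 := (Finset.mem_erase.mp hjE).2
            have hfilt1 : E1.filter (· ≤ j) = insert m ((E1.erase m).filter (· ≤ j)) := by
              ext x
              simp only [Finset.mem_filter, Finset.mem_insert, Finset.mem_erase]
              constructor
              · intro ⟨hx1, hx2⟩
                by_cases hxm : x = m
                · exact Or.inl hxm
                · exact Or.inr ⟨⟨hxm, hx1⟩, hx2⟩
              · rintro (rfl | ⟨⟨_, h1⟩, h2⟩)
                · exact ⟨hmE, hmj⟩
                · exact ⟨h1, h2⟩
            have hmnotf : m ∉ (E1.erase m).filter (· ≤ j) :=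
              fun h => (Finset.mem_erase.mp (Finset.mem_filter.mp h).1).1 rfl
            have hsum1 : prefixSum p E1 j
                = p m + ∑ i ∈ (E1.erase m).filter (· ≤ j), p i := by
              unfold prefixSum
              rw [hfilt1, Finset.sum_insert hmnotf]
            have hfe := hE1feas j hjE1
            have hpℓ : p ℓ ≤ p m := hmax ℓ hℓk
            rw [hsum2]
            omega
      -- conclude
      have h1 := numLate_schedPerm_le p d E2 J0 hE2sub hE2feas
      rw [hJ0card] at h1
      have h2 := optOn_le p d J0 (schedPerm E2)
      omega
    · -- m not on time: E1 already avoids m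
      have hE1sub : E1 ⊆ J0 := by
        intro x hx
        exact Finset.mem_erase.mpr ⟨fun h => hmE (h ▸ hx), Finset.mem_univ x⟩
      have h1 := numLate_schedPerm_le p d E1 J0 hE1sub hE1feas
      rw [hJ0card] at h1
      have h2 := optOn_le p d J0 (schedPerm E1)
      omega
  omega
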